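/- Let V be a vertex ring and e ∈ V. The following are equivalent: (a) e(n)e = 0 for all n ≥ 0 and e(-1)e = e; (b) e is an idempotent of V, i.e., e(n)e = δ_{n,-1} e for all n ∈ ℤ; (c) e lies in the center C(V) and e(-1)e = e. -/
import Mathlib


noncomputable section

/-- Binomial coefficient `C(m, n)` for integer `m` and natural `n`:
`C(m,n) = m(m-1)⋯(m-n+1)/n!`. -/
def ibin (m : ℤ) (n : ℕ) : ℤ :=
  if 0 ≤ m then ((m.toNat.choose n : ℕ) : ℤ)
  else (-1) ^ n * ((((n : ℤ) - m - 1).toNat.choose n : ℕ) : ℤ)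

/-- Binomial coefficient `C(m, n)` for integers `m, n`, zero when `n < 0`. -/
def ibinZ (m n : ℤ) : ℤ := if 0 ≤ n then ibin m n.toNat else 0

/-- A vertex ring structure on an additive abelian group `V`: biadditive
products `mul n u v = u(n)v` for all `n : ℤ`, a vacuum element `one = 𝟙`,
satisfying truncation, the vacuum axioms, and the Jacobi identity. -/
structure VertexRing (V : Type*) [AddCommGroup V] where
  mul : ℤ → V → V → V
  one : V
  add_left : ∀ (n : ℤ) (u u' v : V), mul n (u + u') v = mul n u v + mul n u' v
  add_right : ∀ (n : ℤ) (u v v' : V), mul n u (v + v') = mul n u v + mul n u v'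
  trunc : ∀ u v : V, ∃ n₀ : ℤ, 0 ≤ n₀ ∧ ∀ n : ℤ, n₀ ≤ n → mul n u v = 0
  vac_create : ∀ u : V, mul (-1) u one = u
  vac_ann : ∀ (u : V) (n : ℤ), 0 ≤ n → mul n u one = 0
  jacobi : ∀ (r s t : ℤ) (u v w : V),
      (∑ᶠ i : ℕ, ibin r i • mul (r + s - (i : ℤ)) (mul (t + (i : ℤ)) u v) w) =
      (∑ᶠ i : ℕ, ((-1) ^ i * ibin t i) •
        (mul (r + t - (i : ℤ)) u (mul (s + (i : ℤ)) v w)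
          - (((-1 : ℤˣ) ^ t : ℤˣ) : ℤ) • mul (s + t - (i : ℤ)) v (mul (r + (i : ℤ)) u w)))

/-- The canonical Hasse–Schmidt derivation of a vertex ring: `D m u = u(-m-1)𝟙`. -/
def VertexRing.D {V : Type*} [AddCommGroup V] (R : VertexRing V) (m : ℕ) (u : V) : V :=
  R.mul (-(m : ℤ) - 1) u R.one

/-- The center of a vertex ring: states whose vertex operator is the constant
`u(-1)`, i.e. `u(n) = 0` for all `n ≠ -1`. -/
def VertexRing.center {V : Type*} [AddCommGroup V] (R : VertexRing V) : Set V :=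
  {u | ∀ n : ℤ, n ≠ -1 → ∀ v : V, R.mul n u v = 0}

lemma ibin_zero_right (m : ℤ) : ibin m 0 = 1 := by unfold ibin; split <;> simp
lemma ibin_natCast (k : ℕ) (i : ℕ) : ibin (k : ℤ) i = (k.choose i : ℤ) := by simp [ibin]
lemma ibin_zero_left {i : ℕ} (hi : 1 ≤ i) : ibin 0 i = 0 := by
  have := ibin_natCast 0 i
  simpa [Nat.choose_eq_zero_of_lt hi] using this
lemma ibin_neg_one (i : ℕ) : ibin (-1) i = (-1) ^ i := by
  unfold ibin
  rw [if_neg (by norm_num)]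
  have h1 : ((i : ℤ) - (-1) - 1).toNat = i := by omega
  rw [h1, Nat.choose_self]; simp
lemma ibin_neg_natCast (k i : ℕ) : ibin (-1 - (k : ℤ)) i = (-1) ^ i * (((k + i).choose i : ℕ) : ℤ) := by
  unfold ibin
  rw [if_neg (by omega)]
  have h1 : ((i : ℤ) - (-1 - (k:ℤ)) - 1).toNat = k + i := by omega
  rw [h1]
lemma neg_one_zpow_neg_one : (((-1 : ℤˣ) ^ (-1 : ℤ) : ℤˣ) : ℤ) = -1 := by
  simp [zpow_neg, zpow_one]

namespace VertexRing

variable {V : Type*} [AddCommGroup V] (R : VertexRing V)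

lemma mul_zero_left (n : ℤ) (v : V) : R.mul n 0 v = 0 := by
  have h := R.add_left n 0 0 v
  rw [add_zero] at h
  exact (left_eq_add.mp h)

lemma mul_zero_right (n : ℤ) (u : V) : R.mul n u 0 = 0 := by
  have h := R.add_right n u 0 0
  rw [add_zero] at h
  exact (left_eq_add.mp h)

lemma finsum_pair {M : Type*} [AddCommMonoid M] (f : ℕ → M) (a b : ℕ) (hab : a ≠ b)
    (h : ∀ i, i ≠ a → i ≠ b → f i = 0) : ∑ᶠ i, f i = f a + f b := by
  rw [finsum_eq_finset_sum_of_support_subset f (s := {a, b}) ?_, Finset.sum_pair hab]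
  intro i hi
  simp only [Finset.coe_insert, Finset.coe_singleton, Set.mem_insert_iff, Set.mem_singleton_iff]
  by_contra hcon
  push_neg at hcon
  exact hi (h i hcon.1 hcon.2)

/-- All modes of `e` commute when `e(i)e = 0` for `i ≥ 0`. -/
lemma commute_modes {e : V} (h0 : ∀ i : ℕ, R.mul (i : ℤ) e e = 0) (r s : ℤ) (w : V) :
    R.mul r e (R.mul s e w) = R.mul s e (R.mul r e w) := by
  have J := R.jacobi r s 0 e e w
  have hL : (∑ᶠ i : ℕ, ibin r i • R.mul (r + s - (i : ℤ)) (R.mul (0 + (i : ℤ)) e e) w) = 0 := by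
    rw [finsum_congr (g := fun _ => (0 : V)) ?_, finsum_zero]
    intro i
    rw [zero_add, h0 i, R.mul_zero_left, smul_zero]
  have hR : (∑ᶠ i : ℕ, ((-1) ^ i * ibin 0 i) •
      (R.mul (r + 0 - (i : ℤ)) e (R.mul (s + (i : ℤ)) e w)
        - (((-1 : ℤˣ) ^ (0:ℤ) : ℤˣ) : ℤ) • R.mul (s + 0 - (i : ℤ)) e (R.mul (r + (i : ℤ)) e w))) =
      R.mul r e (R.mul s e w) - R.mul s e (R.mul r e w) := by
    rw [finsum_eq_single _ 0 ?_]
    · simp [ibin_zero_right]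
    · intro i hi
      rw [ibin_zero_left (by omega), mul_zero, zero_smul]
  rw [hL, hR] at J
  exact sub_eq_zero.mp J.symm


/-- Under (a), negative self-products vanish: `e(-2-k)e = 0`. -/
lemma neg_modes_self {e : V} (h0 : ∀ i : ℕ, R.mul (i : ℤ) e e = 0)
    (h1 : R.mul (-1) e e = e) : ∀ k : ℕ, R.mul (-2 - (k : ℤ)) e e = 0 := by
  intro k
  induction k using Nat.strong_induction_on with
  | _ k IH =>
  set n : ℤ := -2 - (k : ℤ) with hn
  have J := R.jacobi n 0 (-1) e e e
  have hL : (∑ᶠ i : ℕ, ibin n i • R.mul (n + 0 - (i : ℤ)) (R.mul (-1 + (i : ℤ)) e e) e)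
      = R.mul n e e := by
    rw [finsum_eq_single _ 0 ?_]
    · rw [ibin_zero_right, one_smul]
      norm_num [h1]
    · intro i hi
      have hc : (-1 + (i : ℤ)) = ((i - 1 : ℕ) : ℤ) := by omega
      rw [hc, h0, R.mul_zero_left, smul_zero]
  have hR : (∑ᶠ i : ℕ, ((-1) ^ i * ibin (-1) i) •
      (R.mul (n + -1 - (i : ℤ)) e (R.mul (0 + (i : ℤ)) e e)
        - (((-1 : ℤˣ) ^ (-1:ℤ) : ℤˣ) : ℤ) • R.mul (0 + -1 - (i : ℤ)) e (R.mul (n + (i : ℤ)) e e)))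
      = ∑ᶠ i : ℕ, R.mul (-1 - (i : ℤ)) e (R.mul (n + (i : ℤ)) e e) := by
    apply finsum_congr
    intro i
    rw [ibin_neg_one, ← mul_pow, neg_one_mul, neg_neg, one_pow, one_smul,
      neg_one_zpow_neg_one, zero_add, h0 i, R.mul_zero_right]
    have : (0 : ℤ) + -1 - (i : ℤ) = -1 - (i : ℤ) := by ring
    rw [this]
    abel
  rw [hL, hR] at J
  have hval : (∑ᶠ i : ℕ, R.mul (-1 - (i : ℤ)) e (R.mul (n + (i : ℤ)) e e))
      = R.mul n e e + R.mul n e e := by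
    rw [finsum_pair _ 0 (k+1) (by omega) ?_]
    · have e0 : R.mul (-1 - ((0:ℕ) : ℤ)) e (R.mul (n + ((0:ℕ) : ℤ)) e e) = R.mul n e e := by
        norm_num
        rw [R.commute_modes h0, h1]
      have e1 : R.mul (-1 - ((k+1 : ℕ) : ℤ)) e (R.mul (n + ((k+1 : ℕ) : ℤ)) e e) = R.mul n e e := by
        have c1 : n + ((k+1 : ℕ) : ℤ) = -1 := by omega
        have c2 : (-1 : ℤ) - ((k+1 : ℕ) : ℤ) = n := by omega
        rw [c1, c2, h1]
      rw [e0, e1]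
    · intro i hi0 hik
      by_cases hbig : k + 2 ≤ i
      · have hc : n + (i : ℤ) = ((i - (k+2) : ℕ) : ℤ) := by omega
        rw [hc, h0, R.mul_zero_right]
      · have hi1 : 1 ≤ i := by omega
        have hile : i ≤ k := by omega
        have hc : n + (i : ℤ) = -2 - ((k - i : ℕ) : ℤ) := by omega
        rw [hc, IH (k - i) (by omega), R.mul_zero_right]
  rw [hval] at J
  exact (left_eq_add.mp J)

end VertexRing

lemma diff_lemma {V : Type*} [AddCommGroup V] (x : ℕ → V) (c : V) (k M : ℕ)
    (h : ∀ j : ℕ, ∑ i ∈ Finset.range (M+1), (((k+j+i).choose i : ℕ) : ℤ) • x i = c) :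
    (∀ i, 1 ≤ i → i ≤ M → x i = 0) ∧ c = x 0 := by
  classical
  set S : ℕ → ℕ → V := fun q j =>
    ∑ i ∈ Finset.range (M+1), (if q ≤ i then (((k+j+i).choose (i-q) : ℕ) : ℤ) else 0) • x i
    with hS
  have hS0 : ∀ j, S 0 j = c := by
    intro j
    rw [← h j]
    apply Finset.sum_congr rfl
    intro i _
    simp
  have hstep : ∀ q j, S (q+1) j = S q (j+1) - S q j := by
    intro q j
    rw [hS]
    simp only
    rw [← Finset.sum_sub_distrib]
    apply Finset.sum_congr rfl
    intro i _
    rw [← sub_smul]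
    congr 1
    by_cases hqi : q + 1 ≤ i
    · have hqi0 : q ≤ i := by omega
      simp only [if_pos hqi, if_pos hqi0]
      rw [show k+(j+1)+i = (k+j+i) + 1 from by omega,
        show i - q = (i - (q+1)) + 1 from by omega, Nat.choose_succ_succ']
      push_cast
      ring
    · by_cases hqi' : q ≤ i
      · have hiq : i = q := by omega
        subst hiq
        simp [hqi, Nat.sub_self]
      · simp [hqi, hqi']
  have hSz : ∀ q j, S (q+1) j = 0 := by
    intro q
    induction q with
    | zero => intro j; rw [hstep, hS0, hS0, sub_self]
    | succ q ih => intro j; rw [hstep, ih, ih, sub_self]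
  have key : ∀ i, 1 ≤ i → i ≤ M → (∀ i', i < i' → i' ≤ M → x i' = 0) → x i = 0 := by
    intro i h1 h2 hup
    have h0 : S i 0 = 0 := by
      have := hSz (i-1) 0
      rwa [Nat.sub_add_cancel h1] at this
    rw [hS] at h0
    simp only at h0
    rw [Finset.sum_eq_single i] at h0
    · rw [if_pos le_rfl, Nat.sub_self] at h0
      simpa using h0
    · intro b hb hbne
      rcases lt_or_gt_of_ne hbne with hlt | hgt
      · rw [if_neg (by omega), zero_smul]
      · rw [hup b hgt (by simpa [Nat.lt_succ_iff] using hb), smul_zero]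
    · intro hnm
      exact absurd (Finset.mem_range.mpr (by omega)) hnm
  have hx : ∀ d : ℕ, ∀ i, 1 ≤ i → i ≤ M → M ≤ i + d → x i = 0 := by
    intro d
    induction d with
    | zero =>
      intro i h1 h2 h3
      exact key i h1 h2 (fun i' hi' hi'2 => by omega)
    | succ d ih =>
      intro i h1 h2 h3
      exact key i h1 h2 (fun i' hi' hi'2 => ih i' (by omega) hi'2 (by omega))
  have hxfin : ∀ i, 1 ≤ i → i ≤ M → x i = 0 := fun i h1 h2 => hx M i h1 h2 (by omega)
  refine ⟨hxfin, ?_⟩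
  have := hS0 0
  rw [hS] at this
  simp only at this
  rw [Finset.sum_eq_single 0] at this
  · simpa using this.symm
  · intro b hb hbne
    rw [hxfin b (by omega) (by simpa [Nat.lt_succ_iff] using hb), smul_zero]
  · intro hnm
    exact absurd (Finset.mem_range.mpr (by omega)) hnm

namespace VertexRing

variable {V : Type*} [AddCommGroup V] (R : VertexRing V)

/-- key consequences of idempotency: `e(-1)` fixes every `e(n)w`, and
`e(-1-i)` kills every `e(m)w` for `i ≥ 1`. -/
lemma U2out {e : V} (hb : ∀ n : ℤ, R.mul n e e = if n = -1 then e else 0)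
    (n : ℤ) (w : V) :
    R.mul n e w = R.mul (-1) e (R.mul n e w) ∧
      ∀ i : ℕ, 1 ≤ i → R.mul (-1 - (i : ℤ)) e (R.mul (n + (i : ℤ)) e w) = 0 := by
  classical
  obtain ⟨K, hK0, hK⟩ := R.trunc e w
  set k := K.toNat with hk
  have hkK : (k : ℤ) = K := Int.toNat_of_nonneg hK0
  set M := (K - n).toNat with hM
  set x : ℕ → V := fun i => R.mul (-1 - (i : ℤ)) e (R.mul (n + (i : ℤ)) e w) with hx
  have hxM : ∀ i : ℕ, (M : ℤ) ≤ (i : ℤ) → x i = 0 := by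
    intro i hi
    have h1 : R.mul (n + (i : ℤ)) e w = 0 := by
      apply hK
      have := Int.self_le_toNat (K - n)
      omega
    rw [hx]
    simp only
    rw [h1, R.mul_zero_right]
  have hEq : ∀ j : ℕ, ∑ i ∈ Finset.range (M+1), (((k+j+i).choose i : ℕ) : ℤ) • x i
      = R.mul n e w := by
    intro j
    have J := R.jacobi ((k + j : ℕ) : ℤ) n (-1 - ((k + j : ℕ) : ℤ)) e e w
    have hL : (∑ᶠ i : ℕ, ibin ((k + j : ℕ) : ℤ) i •
        R.mul (((k + j : ℕ) : ℤ) + n - (i : ℤ))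
          (R.mul ((-1 - ((k + j : ℕ) : ℤ)) + (i : ℤ)) e e) w) = R.mul n e w := by
      rw [finsum_eq_single _ (k + j) ?_]
      · rw [hb, if_pos (by push_cast; ring)]
        rw [ibin_natCast, Nat.choose_self]
        rw [show ((k + j : ℕ) : ℤ) + n - ((k + j : ℕ) : ℤ) = n from by ring]
        simp
      · intro i hi
        rw [hb, if_neg (by omega), R.mul_zero_left, smul_zero]
    have hR : (∑ᶠ i : ℕ, ((-1) ^ i * ibin (-1 - ((k + j : ℕ) : ℤ)) i) •
        (R.mul (((k + j : ℕ) : ℤ) + (-1 - ((k + j : ℕ) : ℤ)) - (i : ℤ)) e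
            (R.mul (n + (i : ℤ)) e w)
          - (((-1 : ℤˣ) ^ (-1 - ((k + j : ℕ) : ℤ)) : ℤˣ) : ℤ) •
            R.mul (n + (-1 - ((k + j : ℕ) : ℤ)) - (i : ℤ)) e
              (R.mul (((k + j : ℕ) : ℤ) + (i : ℤ)) e w)))
        = ∑ i ∈ Finset.range (M+1), (((k+j+i).choose i : ℕ) : ℤ) • x i := by
      have hsummand : ∀ i : ℕ, ((-1) ^ i * ibin (-1 - ((k + j : ℕ) : ℤ)) i) •
          (R.mul (((k + j : ℕ) : ℤ) + (-1 - ((k + j : ℕ) : ℤ)) - (i : ℤ)) e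
              (R.mul (n + (i : ℤ)) e w)
            - (((-1 : ℤˣ) ^ (-1 - ((k + j : ℕ) : ℤ)) : ℤˣ) : ℤ) •
              R.mul (n + (-1 - ((k + j : ℕ) : ℤ)) - (i : ℤ)) e
                (R.mul (((k + j : ℕ) : ℤ) + (i : ℤ)) e w))
          = (((k+j+i).choose i : ℕ) : ℤ) • x i := by
        intro i
        have hz : R.mul (((k + j : ℕ) : ℤ) + (i : ℤ)) e w = 0 := by
          apply hK
          omega
        rw [hz, R.mul_zero_right, smul_zero, sub_zero]
        rw [show ((k + j : ℕ) : ℤ) + (-1 - ((k + j : ℕ) : ℤ)) - (i : ℤ) = -1 - (i : ℤ) from by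
          ring]
        rw [ibin_neg_natCast, ← mul_assoc, ← mul_pow, neg_one_mul, neg_neg, one_pow, one_mul]
      rw [finsum_congr hsummand]
      apply finsum_eq_finset_sum_of_support_subset
      intro i hi
      simp only [Function.mem_support] at hi
      simp only [Finset.coe_range, Set.mem_Iio]
      by_contra hcon
      push_neg at hcon
      exact hi (by rw [hxM i (by omega), smul_zero])
    rw [hL, hR] at J
    exact J.symm
  obtain ⟨h1, h2⟩ := diff_lemma x (R.mul n e w) k M hEq
  constructor
  · have := h2
    rw [hx] at this
    simpa using this
  · intro i hi
    by_cases hiM : i ≤ M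
    · exact h1 i hi hiM
    · exact hxM i (by omega)

/-- `e(-1-i)` kills every `e(m)w`, for `i ≥ 1`. -/
lemma kill_shifted {e : V} (hb : ∀ n : ℤ, R.mul n e e = if n = -1 then e else 0) :
    ∀ i : ℕ, 1 ≤ i → ∀ (m : ℤ) (w : V), R.mul (-1 - (i : ℤ)) e (R.mul m e w) = 0 := by
  intro i hi m w
  have h := (R.U2out hb (m - (i : ℤ)) w).2 i hi
  rwa [show m - (i : ℤ) + (i : ℤ) = m from by ring] at h

lemma h0_of_hb {e : V} (hb : ∀ n : ℤ, R.mul n e e = if n = -1 then e else 0) :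
    ∀ i : ℕ, R.mul (i : ℤ) e e = 0 := by
  intro i
  rw [hb, if_neg (by omega)]

/-- negative modes of an idempotent annihilate everything. -/
lemma neg_central {e : V} (hb : ∀ n : ℤ, R.mul n e e = if n = -1 then e else 0) :
    ∀ m : ℤ, m ≤ -2 → ∀ w : V, R.mul m e w = 0 := by
  intro m hm w
  have h0 := R.h0_of_hb hb
  set i : ℕ := (-1 - m).toNat with hidef
  have hi1 : 1 ≤ i := by omega
  have hmi : (-1 : ℤ) - (i : ℤ) = m := by omega
  calc R.mul m e w = R.mul (-1) e (R.mul m e w) := (R.U2out hb m w).1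
    _ = R.mul m e (R.mul (-1) e w) := R.commute_modes h0 _ _ _
    _ = 0 := by rw [← hmi]; exact R.kill_shifted hb i hi1 (-1) w

/-- nonnegative modes of an idempotent annihilate everything. -/
lemma nonneg_central {e : V} (hb : ∀ n : ℤ, R.mul n e e = if n = -1 then e else 0) :
    ∀ (n : ℕ) (w : V), R.mul (n : ℤ) e w = 0 := by
  have h0 := R.h0_of_hb hb
  intro n
  induction n using Nat.strong_induction_on with
  | _ n IH =>
  intro w
  have J := R.jacobi 0 (n : ℤ) (-1) e e w
  have hL : (∑ᶠ i : ℕ, ibin 0 i •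
      R.mul (0 + (n : ℤ) - (i : ℤ)) (R.mul (-1 + (i : ℤ)) e e) w) = R.mul (n : ℤ) e w := by
    rw [finsum_eq_single _ 0 ?_]
    · rw [ibin_zero_right, one_smul]
      norm_num [hb]
    · intro i hi
      rw [ibin_zero_left (by omega), zero_smul]
  set f : ℕ → V := fun i => R.mul (0 + -1 - (i : ℤ)) e (R.mul ((n : ℤ) + (i : ℤ)) e w)
      + R.mul ((n : ℤ) + -1 - (i : ℤ)) e (R.mul (0 + (i : ℤ)) e w) with hf
  have hR : (∑ᶠ i : ℕ, ((-1) ^ i * ibin (-1) i) •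
      (R.mul (0 + -1 - (i : ℤ)) e (R.mul ((n : ℤ) + (i : ℤ)) e w)
        - (((-1 : ℤˣ) ^ (-1 : ℤ) : ℤˣ) : ℤ) •
          R.mul ((n : ℤ) + -1 - (i : ℤ)) e (R.mul (0 + (i : ℤ)) e w)))
      = ∑ᶠ i : ℕ, f i := by
    apply finsum_congr
    intro i
    rw [ibin_neg_one, ← mul_pow, neg_one_mul, neg_neg, one_pow, one_smul,
      neg_one_zpow_neg_one, neg_smul, one_smul, sub_neg_eq_add]
  rw [hL, hR] at J
  have hfirst : ∀ i : ℕ, 1 ≤ i →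
      R.mul (0 + -1 - (i : ℤ)) e (R.mul ((n : ℤ) + (i : ℤ)) e w) = 0 := by
    intro i hi
    rw [show (0 : ℤ) + -1 - (i : ℤ) = -1 - (i : ℤ) from by ring]
    exact R.kill_shifted hb i hi _ w
  by_cases hn0 : n = 0
  · subst hn0
    have hval : (∑ᶠ i : ℕ, f i) = R.mul ((0:ℕ) : ℤ) e w + R.mul ((0:ℕ) : ℤ) e w := by
      rw [finsum_eq_single _ 0 ?_]
      · rw [hf]
        simp only
        norm_num
        rw [← (R.U2out hb 0 w).1]
      · intro i hi
        rw [hf]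
        simp only
        rw [hfirst i (by omega)]
        rw [show ((0:ℕ) : ℤ) + -1 - (i : ℤ) = -1 - (i : ℤ) from by push_cast; ring,
          R.kill_shifted hb i (by omega) _ w, add_zero]
    rw [hval] at J
    exact left_eq_add.mp J
  · have hval : (∑ᶠ i : ℕ, f i) = R.mul (n : ℤ) e w + R.mul (n : ℤ) e w := by
      rw [finsum_pair f 0 n (by omega) ?_]
      · have hf0 : f 0 = R.mul (n : ℤ) e w := by
          rw [hf]
          simp only
          norm_num
          have hz : R.mul (0 : ℤ) e w = 0 := by exact_mod_cast IH 0 (by omega) w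
          rw [hz, R.mul_zero_right, add_zero, ← (R.U2out hb (n : ℤ) w).1]
        have hfn : f n = R.mul (n : ℤ) e w := by
          rw [hf]
          simp only
          rw [hfirst n (by omega), zero_add, zero_add,
            show (n : ℤ) + -1 - (n : ℤ) = -1 from by ring, ← (R.U2out hb (n : ℤ) w).1]
        rw [hf0, hfn]
      · intro i hi0 hin
        rw [hf]
        simp only
        rw [hfirst i (by omega), zero_add, zero_add]
        rcases lt_or_gt_of_ne hin with hlt | hgt
        · rw [show (i : ℤ) = ((i : ℕ) : ℤ) from rfl, IH i hlt w, R.mul_zero_right]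
        · rw [R.neg_central hb ((n : ℤ) + -1 - (i : ℤ)) (by omega) _]
    rw [hval] at J
    exact left_eq_add.mp J

end VertexRing


/-- For `e ∈ V` the following are equivalent: (a) `e(n)e = 0` for `n ≥ 0` and
`e(-1)e = e`; (b) `e(n)e = δ_{n,-1} e` for all `n`; (c) `e` is in the center
and `e(-1)e = e`. -/
theorem idempotent_characterizations {V : Type*} [AddCommGroup V] (R : VertexRing V) (e : V) :
    (((∀ n : ℤ, 0 ≤ n → R.mul n e e = 0) ∧ R.mul (-1) e e = e) ↔
      (∀ n : ℤ, R.mul n e e = if n = -1 then e else 0)) ∧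
    ((∀ n : ℤ, R.mul n e e = if n = -1 then e else 0) ↔
      (e ∈ R.center ∧ R.mul (-1) e e = e)) := by
  constructor
  · constructor
    · rintro ⟨h0', h1⟩ n
      have h0 : ∀ i : ℕ, R.mul (i : ℤ) e e = 0 := fun i => h0' i (Int.natCast_nonneg i)
      by_cases hn : n = -1
      · rw [if_pos hn, hn, h1]
      · rw [if_neg hn]
        rcases lt_or_ge n 0 with h | h
        · rw [show n = -2 - (((-2 - n).toNat : ℕ) : ℤ) from by omega]
          exact R.neg_modes_self h0 h1 _
        · rw [show n = ((n.toNat : ℕ) : ℤ) from by omega]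
          exact h0 _
    · intro hb
      exact ⟨fun n hn => by rw [hb, if_neg (by omega)], by rw [hb, if_pos rfl]⟩
  · constructor
    · intro hb
      refine ⟨?_, by rw [hb, if_pos rfl]⟩
      intro n hn v
      rcases lt_or_ge n 0 with h | h
      · exact R.neg_central hb n (by omega) v
      · rw [show n = ((n.toNat : ℕ) : ℤ) from by omega]
        exact R.nonneg_central hb _ v
    · rintro ⟨hc, h1⟩ n
      by_cases hn : n = -1
      · rw [if_pos hn, hn, h1]
      · rw [if_neg hn]
        exact hc n hn e
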